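/- Let D be a C*-algebra (which is in particular a complex algebra), N ≥ 1, and let S_{ij} ∈ D (1 ≤ i,j ≤ N) satisfy the defining relations of the quantum Cuntz–Krieger algebra FO(TM_N) of the trivial quantum graph on M_N(ℂ): Σ_{k,l} S_{ik} S_{lk}^* S_{lj} = S_{ij} and Σ_k S_{ki}^* S_{kj} = Σ_k S_{ik} S_{jk}^* for all i, j. Let U ∈ M_N(ℂ) be a unitary matrix and λ ∈ ℂ with |λ| = 1, and define T_{ij} := λ · Σ_{p,q} U_{ip} \overline{U_{jq}} · S_{pq} (scalar multiplication in D), i.e. T = λ·U S U^*. Then the elements T_{ij} again satisfy both relations: Σ_{k,l} T_{ik} T_{lk}^* T_{lj} = T_{ij} and Σ_k T_{ki}^* T_{kj} = Σ_k T_{ik} T_{jk}^*. -/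

import Mathlib

section rots
variable {ι M : Type*} [Fintype ι] [AddCommMonoid M]

private lemma rot3 (f : ι → ι → ι → M) :
    ∑ a, ∑ b, ∑ c, f a b c = ∑ b, ∑ c, ∑ a, f a b c := by
  rw [Finset.sum_comm]
  exact Finset.sum_congr rfl fun b _ => Finset.sum_comm

private lemma rot4 (f : ι → ι → ι → ι → M) :
    ∑ a, ∑ b, ∑ c, ∑ d, f a b c d = ∑ b, ∑ c, ∑ d, ∑ a, f a b c d := by
  rw [Finset.sum_comm]
  exact Finset.sum_congr rfl fun b _ => rot3 fun a c d => f a b c d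

private lemma rot5 (f : ι → ι → ι → ι → ι → M) :
    ∑ a, ∑ b, ∑ c, ∑ d, ∑ e, f a b c d e = ∑ b, ∑ c, ∑ d, ∑ e, ∑ a, f a b c d e := by
  rw [Finset.sum_comm]
  exact Finset.sum_congr rfl fun b _ => rot4 fun a c d e => f a b c d e

private lemma rot6 (f : ι → ι → ι → ι → ι → ι → M) :
    ∑ a, ∑ b, ∑ c, ∑ d, ∑ e, ∑ g, f a b c d e g
      = ∑ b, ∑ c, ∑ d, ∑ e, ∑ g, ∑ a, f a b c d e g := by
  rw [Finset.sum_comm]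
  exact Finset.sum_congr rfl fun b _ => rot5 fun a c d e g => f a b c d e g

end rots

theorem statement_11 (D : Type*) [NonUnitalNormedRing D] [StarRing D] [CStarRing D]
    [CompleteSpace D] [NormedSpace ℂ D] [IsScalarTower ℂ D D] [SMulCommClass ℂ D D]
    [StarModule ℂ D]
    (N : ℕ) (hN : 1 ≤ N)
    -- generators of FO(TM_N): the relations of the trivial quantum graph on M_N(ℂ)
    (S : Fin N → Fin N → D)
    (h1 : ∀ i j, ∑ k, ∑ l, S i k * star (S l k) * S l j = S i j)
    (h2 : ∀ i j, ∑ k, star (S k i) * S k j = ∑ k, S i k * star (S j k))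
    -- a unitary U ∈ M_N(ℂ) and λ ∈ U(1)
    (U : Matrix (Fin N) (Fin N) ℂ) (hU : U ∈ Matrix.unitaryGroup (Fin N) ℂ)
    (lam : ℂ) (hlam : ‖lam‖ = 1)
    -- T = λ U S U^*
    (T : Fin N → Fin N → D)
    (hT : ∀ i j, T i j = ∑ p, ∑ q, (lam * U i p * (starRingEnd ℂ) (U j q)) • S p q) :
    (∀ i j, ∑ k, ∑ l, T i k * star (T l k) * T l j = T i j) ∧
    (∀ i j, ∑ k, star (T k i) * T k j = ∑ k, T i k * star (T j k)) := by
  have hlam1 : lam * (starRingEnd ℂ) lam = 1 := by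
    rw [Complex.mul_conj, Complex.normSq_eq_norm_sq, hlam]; norm_num
  have hUd : ∀ p p' : Fin N, (∑ k, (starRingEnd ℂ) (U k p) * U k p') = if p = p' then 1 else 0 := by
    intro p p'
    have h := Matrix.mem_unitaryGroup_iff'.mp hU
    have h2 := congrFun (congrFun h p) p'
    simpa [Matrix.mul_apply, Matrix.one_apply, Matrix.conjTranspose_apply] using h2
  have hTstar : ∀ i j, star (T i j) = ∑ p, ∑ q,
      ((starRingEnd ℂ) lam * (starRingEnd ℂ) (U i p) * U j q) • star (S p q) := by
    intro i j
    rw [hT, star_sum]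
    refine Finset.sum_congr rfl fun p _ => ?_
    rw [star_sum]
    refine Finset.sum_congr rfl fun q _ => ?_
    rw [star_smul]
    congr 1
    simp only [RCLike.star_def, map_mul, Complex.conj_conj]
  -- the key contraction: ∑ₖ T i k (T l k)^*
  have eA : ∀ i l, ∑ k, T i k * star (T l k)
      = ∑ p, ∑ q, ∑ p', (U i p * (starRingEnd ℂ) (U l p')) • (S p q * star (S p' q)) := by
    intro i l
    calc ∑ k, T i k * star (T l k)
        = ∑ k, ∑ p, ∑ q, ∑ p', ∑ q',
            ((lam * U i p * (starRingEnd ℂ) (U k q)) *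
              ((starRingEnd ℂ) lam * (starRingEnd ℂ) (U l p') * U k q')) •
            (S p q * star (S p' q')) := by
          refine Finset.sum_congr rfl fun k _ => ?_
          rw [hT, hTstar, Finset.sum_mul]
          refine Finset.sum_congr rfl fun p _ => ?_
          rw [Finset.sum_mul]
          refine Finset.sum_congr rfl fun q _ => ?_
          rw [Finset.mul_sum]
          refine Finset.sum_congr rfl fun p' _ => ?_
          rw [Finset.mul_sum]
          refine Finset.sum_congr rfl fun q' _ => ?_
          rw [smul_mul_smul_comm]
      _ = ∑ p, ∑ q, ∑ p', ∑ q', ∑ k,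
            ((lam * U i p * (starRingEnd ℂ) (U k q)) *
              ((starRingEnd ℂ) lam * (starRingEnd ℂ) (U l p') * U k q')) •
            (S p q * star (S p' q')) := rot5 _
      _ = ∑ p, ∑ q, ∑ p', ∑ q',
            ((U i p * (starRingEnd ℂ) (U l p')) * if q = q' then 1 else 0) •
            (S p q * star (S p' q')) := by
          refine Finset.sum_congr rfl fun p _ => Finset.sum_congr rfl fun q _ =>
            Finset.sum_congr rfl fun p' _ => Finset.sum_congr rfl fun q' _ => ?_
          rw [← Finset.sum_smul]
          congr 1
          rw [← hUd q q', Finset.mul_sum]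
          refine Finset.sum_congr rfl fun k _ => ?_
          calc (lam * U i p * (starRingEnd ℂ) (U k q)) *
                ((starRingEnd ℂ) lam * (starRingEnd ℂ) (U l p') * U k q')
              = (lam * (starRingEnd ℂ) lam) *
                  ((U i p * (starRingEnd ℂ) (U l p')) * ((starRingEnd ℂ) (U k q) * U k q')) := by
                ring
            _ = (U i p * (starRingEnd ℂ) (U l p')) * ((starRingEnd ℂ) (U k q) * U k q') := by
                rw [hlam1, one_mul]
      _ = ∑ p, ∑ q, ∑ p', (U i p * (starRingEnd ℂ) (U l p')) • (S p q * star (S p' q)) := by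
          refine Finset.sum_congr rfl fun p _ => Finset.sum_congr rfl fun q _ =>
            Finset.sum_congr rfl fun p' _ => ?_
          simp [mul_ite, mul_one, mul_zero, ite_smul, zero_smul, Finset.sum_ite_eq]
  -- the key contraction: ∑ₖ (T k i)^* T k j
  have eB : ∀ i j, ∑ k, star (T k i) * T k j
      = ∑ q, ∑ q', (U i q * (starRingEnd ℂ) (U j q')) • ∑ p, star (S p q) * S p q' := by
    intro i j
    calc ∑ k, star (T k i) * T k j
        = ∑ k, ∑ p, ∑ q, ∑ p', ∑ q',
            (((starRingEnd ℂ) lam * (starRingEnd ℂ) (U k p) * U i q) *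
              (lam * U k p' * (starRingEnd ℂ) (U j q'))) •
            (star (S p q) * S p' q') := by
          refine Finset.sum_congr rfl fun k _ => ?_
          rw [hTstar, hT, Finset.sum_mul]
          refine Finset.sum_congr rfl fun p _ => ?_
          rw [Finset.sum_mul]
          refine Finset.sum_congr rfl fun q _ => ?_
          rw [Finset.mul_sum]
          refine Finset.sum_congr rfl fun p' _ => ?_
          rw [Finset.mul_sum]
          refine Finset.sum_congr rfl fun q' _ => ?_
          rw [smul_mul_smul_comm]
      _ = ∑ p, ∑ q, ∑ p', ∑ q', ∑ k,
            (((starRingEnd ℂ) lam * (starRingEnd ℂ) (U k p) * U i q) *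
              (lam * U k p' * (starRingEnd ℂ) (U j q'))) •
            (star (S p q) * S p' q') := rot5 _
      _ = ∑ q, ∑ p', ∑ q', ∑ p, ∑ k,
            (((starRingEnd ℂ) lam * (starRingEnd ℂ) (U k p) * U i q) *
              (lam * U k p' * (starRingEnd ℂ) (U j q'))) •
            (star (S p q) * S p' q') := rot4 _
      _ = ∑ q, ∑ q', ∑ p, ∑ p', ∑ k,
            (((starRingEnd ℂ) lam * (starRingEnd ℂ) (U k p) * U i q) *
              (lam * U k p' * (starRingEnd ℂ) (U j q'))) •
            (star (S p q) * S p' q') := by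
          refine Finset.sum_congr rfl fun q _ => ?_
          exact rot3 fun p' q' p => ∑ k,
            (((starRingEnd ℂ) lam * (starRingEnd ℂ) (U k p) * U i q) *
              (lam * U k p' * (starRingEnd ℂ) (U j q'))) •
            (star (S p q) * S p' q')
      _ = ∑ q, ∑ q', ∑ p, ∑ p',
            ((U i q * (starRingEnd ℂ) (U j q')) * if p = p' then 1 else 0) •
            (star (S p q) * S p' q') := by
          refine Finset.sum_congr rfl fun q _ => Finset.sum_congr rfl fun q' _ =>
            Finset.sum_congr rfl fun p _ => Finset.sum_congr rfl fun p' _ => ?_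
          rw [← Finset.sum_smul]
          congr 1
          rw [← hUd p p', Finset.mul_sum]
          refine Finset.sum_congr rfl fun k _ => ?_
          calc ((starRingEnd ℂ) lam * (starRingEnd ℂ) (U k p) * U i q) *
                (lam * U k p' * (starRingEnd ℂ) (U j q'))
              = (lam * (starRingEnd ℂ) lam) *
                  ((U i q * (starRingEnd ℂ) (U j q')) * ((starRingEnd ℂ) (U k p) * U k p')) := by
                ring
            _ = (U i q * (starRingEnd ℂ) (U j q')) * ((starRingEnd ℂ) (U k p) * U k p') := by
                rw [hlam1, one_mul]
      _ = ∑ q, ∑ q', ∑ p,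
            (U i q * (starRingEnd ℂ) (U j q')) • (star (S p q) * S p q') := by
          refine Finset.sum_congr rfl fun q _ => Finset.sum_congr rfl fun q' _ =>
            Finset.sum_congr rfl fun p _ => ?_
          simp [mul_ite, mul_one, mul_zero, ite_smul, zero_smul, Finset.sum_ite_eq]
      _ = ∑ q, ∑ q', (U i q * (starRingEnd ℂ) (U j q')) • ∑ p, star (S p q) * S p q' := by
          refine Finset.sum_congr rfl fun q _ => Finset.sum_congr rfl fun q' _ => ?_
          rw [Finset.smul_sum]
  constructor
  · -- first relation
    intro i j
    calc ∑ k, ∑ l, T i k * star (T l k) * T l j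
        = ∑ l, ∑ k, T i k * star (T l k) * T l j := Finset.sum_comm
      _ = ∑ l, (∑ k, T i k * star (T l k)) * T l j :=
          Finset.sum_congr rfl fun l _ => (Finset.sum_mul _ _ _).symm
      _ = ∑ l, (∑ p, ∑ q, ∑ p',
            (U i p * (starRingEnd ℂ) (U l p')) • (S p q * star (S p' q))) * T l j := by
          simp only [eA]
      _ = ∑ l, ∑ p, ∑ q, ∑ p', ∑ p'', ∑ q'',
            ((U i p * (starRingEnd ℂ) (U l p')) *
              (lam * U l p'' * (starRingEnd ℂ) (U j q''))) •
            (S p q * star (S p' q) * S p'' q'') := by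
          refine Finset.sum_congr rfl fun l _ => ?_
          rw [hT, Finset.sum_mul]
          refine Finset.sum_congr rfl fun p _ => ?_
          rw [Finset.sum_mul]
          refine Finset.sum_congr rfl fun q _ => ?_
          rw [Finset.sum_mul]
          refine Finset.sum_congr rfl fun p' _ => ?_
          rw [Finset.mul_sum]
          refine Finset.sum_congr rfl fun p'' _ => ?_
          rw [Finset.mul_sum]
          refine Finset.sum_congr rfl fun q'' _ => ?_
          rw [smul_mul_smul_comm]
      _ = ∑ p, ∑ q, ∑ p', ∑ p'', ∑ q'', ∑ l,
            ((U i p * (starRingEnd ℂ) (U l p')) *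
              (lam * U l p'' * (starRingEnd ℂ) (U j q''))) •
            (S p q * star (S p' q) * S p'' q'') := rot6 _
      _ = ∑ p, ∑ q, ∑ p', ∑ p'', ∑ q'',
            ((lam * (U i p * (starRingEnd ℂ) (U j q''))) * if p' = p'' then 1 else 0) •
            (S p q * star (S p' q) * S p'' q'') := by
          refine Finset.sum_congr rfl fun p _ => Finset.sum_congr rfl fun q _ =>
            Finset.sum_congr rfl fun p' _ => Finset.sum_congr rfl fun p'' _ =>
            Finset.sum_congr rfl fun q'' _ => ?_
          rw [← Finset.sum_smul]
          congr 1
          rw [← hUd p' p'', Finset.mul_sum]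
          refine Finset.sum_congr rfl fun l _ => ?_
          ring
      _ = ∑ p, ∑ q, ∑ p', ∑ q'', ∑ p'',
            ((lam * (U i p * (starRingEnd ℂ) (U j q''))) * if p' = p'' then 1 else 0) •
            (S p q * star (S p' q) * S p'' q'') := by
          refine Finset.sum_congr rfl fun p _ => Finset.sum_congr rfl fun q _ =>
            Finset.sum_congr rfl fun p' _ => Finset.sum_comm
      _ = ∑ p, ∑ q, ∑ p', ∑ q'',
            (lam * (U i p * (starRingEnd ℂ) (U j q''))) •
            (S p q * star (S p' q) * S p' q'') := by
          refine Finset.sum_congr rfl fun p _ => Finset.sum_congr rfl fun q _ =>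
            Finset.sum_congr rfl fun p' _ => Finset.sum_congr rfl fun q'' _ => ?_
          simp [mul_ite, mul_one, mul_zero, ite_smul, zero_smul, Finset.sum_ite_eq]
      _ = ∑ p, ∑ q'', ∑ q, ∑ p',
            (lam * (U i p * (starRingEnd ℂ) (U j q''))) •
            (S p q * star (S p' q) * S p' q'') := by
          refine Finset.sum_congr rfl fun p _ => ?_
          exact (rot3 _).trans (rot3 _)
      _ = ∑ p, ∑ q'',
            (lam * (U i p * (starRingEnd ℂ) (U j q''))) •
            ∑ q, ∑ p', S p q * star (S p' q) * S p' q'' := by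
          refine Finset.sum_congr rfl fun p _ => Finset.sum_congr rfl fun q'' _ => ?_
          rw [Finset.smul_sum]
          refine Finset.sum_congr rfl fun q _ => ?_
          rw [Finset.smul_sum]
      _ = ∑ p, ∑ q'',
            (lam * (U i p * (starRingEnd ℂ) (U j q''))) • S p q'' := by
          simp only [h1]
      _ = T i j := by
          rw [hT]
          refine Finset.sum_congr rfl fun p _ => Finset.sum_congr rfl fun q _ => ?_
          rw [← mul_assoc]
  · -- second relation
    intro i j
    rw [eB i j, eA i j]
    simp only [h2]
    refine Eq.symm ?_
    calc ∑ p, ∑ q, ∑ p', (U i p * (starRingEnd ℂ) (U j p')) • (S p q * star (S p' q))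
        = ∑ p, ∑ p', ∑ q, (U i p * (starRingEnd ℂ) (U j p')) • (S p q * star (S p' q)) :=
          Finset.sum_congr rfl fun p _ => Finset.sum_comm
      _ = ∑ p, ∑ p', (U i p * (starRingEnd ℂ) (U j p')) • ∑ q, S p q * star (S p' q) :=
          Finset.sum_congr rfl fun p _ => Finset.sum_congr rfl fun p' _ =>
            (Finset.smul_sum).symm
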